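/- Let X be a gts and αX a topological compactification of X_top. Define Ex_{αX}(U) = αX ∖ cl_{αX}(X ∖ U) for U ∈ Op_X, and let Op^w = {Ex_{αX}(U) : U ∈ Op_X}, Cov^w = {V ∈ Cov^S_{αX} : V ⊆ Op^w}. Then Cov^w is a generalized topology in αX if and only if the operator Ex_{αX} is admissibly additive, i.e., for each U ∈ Cov_X, Ex_{αX}(⋃U) = ⋃_{U∈U} Ex_{αX}(U). -/

import Mathlib

open Set TopologicalSpace Topology

universe u

/-- A generalized topology in the sense of Delfs–Knebusch (axioms following
Piękosz, Definition 2.2.1): `Cov` is the collection of admissible open families,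
and the open sets are the members of `⋃₀ Cov`. -/
structure GenTop (X : Type u) : Type u where
  Cov : Set (Set (Set X))
  univ_open : Set.univ ∈ ⋃₀ Cov
  finite_admissible : ∀ 𝒰 : Set (Set X), 𝒰.Finite → 𝒰 ⊆ ⋃₀ Cov → 𝒰 ∈ Cov
  union_open : ∀ 𝒰 ∈ Cov, ⋃₀ 𝒰 ∈ ⋃₀ Cov
  restrict : ∀ 𝒰 ∈ Cov, ∀ V ∈ ⋃₀ Cov, (fun U => V ∩ U) '' 𝒰 ∈ Cov
  transitive : ∀ 𝒰 ∈ Cov, ∀ f : Set X → Set (Set X),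
    (∀ U ∈ 𝒰, f U ∈ Cov ∧ ⋃₀ f U = U) → {V : Set X | ∃ U ∈ 𝒰, V ∈ f U} ∈ Cov
  coarsen : ∀ 𝒰 ∈ Cov, ∀ 𝒱 ⊆ ⋃₀ Cov, (∀ U ∈ 𝒰, ∃ V ∈ 𝒱, U ⊆ V) →
    ⋃₀ 𝒱 = ⋃₀ 𝒰 → 𝒱 ∈ Cov
  regular : ∀ 𝒰 ∈ Cov, ∀ W ⊆ ⋃₀ 𝒰, (∀ U ∈ 𝒰, W ∩ U ∈ ⋃₀ Cov) → W ∈ ⋃₀ Cov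

namespace GenTop

variable {X : Type u} (G : GenTop X)

/-- The open sets of a gts. -/
def Opens : Set (Set X) := ⋃₀ G.Cov

/-- The closed sets of a gts. -/
def Closeds : Set (Set X) := {A : Set X | Aᶜ ∈ G.Opens}

/-- The topologization of a gts: the topology generated by the open sets. -/
def topol : TopologicalSpace X := TopologicalSpace.generateFrom G.Opens

/-- A gts is weakly normal if disjoint sets, each a singleton or closed,
can be separated by disjoint open sets. -/
def WeaklyNormal : Prop :=
  ∀ A₁ A₂ : Set X, ((∃ x, A₁ = {x}) ∨ A₁ ∈ G.Closeds) →
    ((∃ x, A₂ = {x}) ∨ A₂ ∈ G.Closeds) → Disjoint A₁ A₂ →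
    ∃ W₁ ∈ G.Opens, ∃ W₂ ∈ G.Opens, Disjoint W₁ W₂ ∧ A₁ ⊆ W₁ ∧ A₂ ⊆ W₂

end GenTop

variable {X K : Type u}

/-- The opens of the strongest generalized topology in a compactification `K`
associated with the gts `X`: opens of `K` whose trace on `X` is open. -/
def OpS (G : GenTop X) [TopologicalSpace K] (α : X → K) : Set (Set K) :=
  {V : Set K | IsOpen V ∧ α ⁻¹' V ∈ G.Opens}

/-- The strongest generalized topology in a compactification `K` associated
with the generalized topology of `X`. -/
def CovS (G : GenTop X) [TopologicalSpace K] (α : X → K) : Set (Set (Set K)) :=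
  {𝒱 : Set (Set K) | 𝒱 ⊆ OpS G α ∧ (fun V => α ⁻¹' V) '' 𝒱 ∈ G.Cov}

/-- The extension operator `Ex_{αX}(U) = αX ∖ cl_{αX}(X ∖ U)`. -/
def ExOp [TopologicalSpace K] (α : X → K) (U : Set X) : Set K :=
  (closure (α '' Uᶜ))ᶜ

/-- The wallmanian part of `Op^S`. -/
def Opw (G : GenTop X) [TopologicalSpace K] (α : X → K) : Set (Set K) :=
  {V : Set K | ∃ U ∈ G.Opens, V = ExOp α U}

/-- The wallmanian part of `Cov^S`. -/
def Covw (G : GenTop X) [TopologicalSpace K] (α : X → K) : Set (Set (Set K)) :=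
  {𝒱 : Set (Set K) | 𝒱 ∈ CovS G α ∧ 𝒱 ⊆ Opw G α}

section AuxLemmas

variable {X K : Type u} (G : GenTop X) [TopologicalSpace K] {α : X → K}

lemma aux_mem_opens_of_mem_cov {𝒰 : Set (Set X)} (h𝒰 : 𝒰 ∈ G.Cov) {U : Set X}
    (hU : U ∈ 𝒰) : U ∈ G.Opens := ⟨𝒰, h𝒰, hU⟩

lemma aux_exop_open (α : X → K) (U : Set X) : IsOpen (ExOp α U) :=
  isClosed_closure.isOpen_compl

lemma aux_exop_mono {U U' : Set X} (h : U ⊆ U') : ExOp α U ⊆ ExOp (K := K) α U' :=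
  compl_subset_compl.2 (closure_mono (Set.image_mono (Set.compl_subset_compl.2 h)))

lemma aux_exop_inter (α : X → K) (U U' : Set X) :
    ExOp α (U ∩ U') = ExOp α U ∩ ExOp α U' := by
  unfold ExOp
  rw [Set.compl_inter, Set.image_union, closure_union, Set.compl_union]

lemma aux_preimage_exop (hind : @Topology.IsInducing X K G.topol _ α) {U : Set X}
    (hU : U ∈ G.Opens) : α ⁻¹' ExOp α U = U := by
  letI := G.topol
  have hopen : IsOpen[G.topol] U := TopologicalSpace.isOpen_generateFrom_of_mem hU
  have hcl : closure Uᶜ = Uᶜ := hopen.isClosed_compl.closure_eq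
  have h2 := hind.closure_eq_preimage_closure_image Uᶜ
  have : α ⁻¹' ExOp α U = (α ⁻¹' closure (α '' Uᶜ))ᶜ := rfl
  rw [this, ← h2, hcl, compl_compl]

lemma aux_opw_spec (hind : @Topology.IsInducing X K G.topol _ α) {V : Set K}
    (hV : V ∈ Opw G α) :
    IsOpen V ∧ α ⁻¹' V ∈ G.Opens ∧ V = ExOp α (α ⁻¹' V) := by
  obtain ⟨U, hU, rfl⟩ := hV
  rw [aux_preimage_exop G hind hU]
  exact ⟨aux_exop_open α U, hU, rfl⟩

lemma aux_opw_subset_opS (hind : @Topology.IsInducing X K G.topol _ α) :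
    Opw G α ⊆ OpS G α := fun _ hV =>
  ⟨(aux_opw_spec G hind hV).1, (aux_opw_spec G hind hV).2.1⟩

lemma aux_sUnion_covw (hind : @Topology.IsInducing X K G.topol _ α) :
    ⋃₀ Covw G α = Opw G α := by
  apply subset_antisymm
  · rintro V ⟨𝒱, h𝒱, hV⟩
    exact h𝒱.2 hV
  · intro V hV
    refine ⟨{V}, ⟨⟨?_, ?_⟩, ?_⟩, rfl⟩
    · exact Set.singleton_subset_iff.2 (aux_opw_subset_opS G hind hV)
    · rw [Set.image_singleton]
      exact G.finite_admissible _ (Set.finite_singleton _)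
        (Set.singleton_subset_iff.2 (aux_opw_spec G hind hV).2.1)
    · exact Set.singleton_subset_iff.2 hV

lemma aux_preimage_sUnion (α : X → K) (𝒱 : Set (Set K)) :
    α ⁻¹' ⋃₀ 𝒱 = ⋃₀ ((fun V => α ⁻¹' V) '' 𝒱) := by
  rw [Set.sUnion_image, Set.preimage_sUnion]

end AuxLemmas

/-- `Cov^w` is a generalized topology in the compactification `αX` iff the
operator `Ex_{αX}` is admissibly additive. -/
theorem stmt_12 {X K : Type u} (G : GenTop X) [TopologicalSpace K] [CompactSpace K]
    (α : X → K) (hinj : Function.Injective α)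
    (hind : @Topology.IsInducing X K G.topol _ α) (hdense : DenseRange α) :
    (∃ G' : GenTop K, G'.Cov = Covw G α) ↔
      ∀ 𝒰 ∈ G.Cov, ExOp α (⋃₀ 𝒰) = ⋃ U ∈ 𝒰, ExOp α U := by
  constructor
  · -- forward: the existence of the gts forces admissible additivity
    rintro ⟨G', hG'⟩ 𝒰 h𝒰
    set 𝒱 : Set (Set K) := ExOp α '' 𝒰 with h𝒱def
    have hpre : (fun V => α ⁻¹' V) '' 𝒱 = 𝒰 := by
      rw [h𝒱def, Set.image_image]
      have : ∀ U ∈ 𝒰, α ⁻¹' ExOp α U = U := fun U hU =>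
        aux_preimage_exop G hind (aux_mem_opens_of_mem_cov G h𝒰 hU)
      calc (fun U => α ⁻¹' ExOp α U) '' 𝒰 = (fun U => U) '' 𝒰 :=
            Set.image_congr this
        _ = 𝒰 := Set.image_id _
    have h𝒱cov : 𝒱 ∈ Covw G α := by
      refine ⟨⟨?_, ?_⟩, ?_⟩
      · rintro V ⟨U, hU, rfl⟩
        exact ⟨aux_exop_open α U, by
          rw [aux_preimage_exop G hind (aux_mem_opens_of_mem_cov G h𝒰 hU)]
          exact aux_mem_opens_of_mem_cov G h𝒰 hU⟩
      · rw [hpre]; exact h𝒰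
      · rintro V ⟨U, hU, rfl⟩
        exact ⟨U, aux_mem_opens_of_mem_cov G h𝒰 hU, rfl⟩
    have hmem : ⋃₀ 𝒱 ∈ ⋃₀ G'.Cov := G'.union_open 𝒱 (by rw [hG']; exact h𝒱cov)
    have hopw : ⋃₀ 𝒱 ∈ Opw G α := by
      rw [hG'] at hmem
      obtain ⟨𝒲, h𝒲, hmem⟩ := hmem
      exact h𝒲.2 hmem
    obtain ⟨U', hU', hEq⟩ := hopw
    have hU'eq : U' = ⋃₀ 𝒰 := by
      have h1 : α ⁻¹' ⋃₀ 𝒱 = U' := by rw [hEq, aux_preimage_exop G hind hU']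
      have h2 : α ⁻¹' ⋃₀ 𝒱 = ⋃₀ 𝒰 := by rw [aux_preimage_sUnion, hpre]
      rw [← h1, h2]
    rw [← Set.sUnion_image, ← h𝒱def, hEq, hU'eq]
  · -- backward: construct the generalized topology
    intro hadd
    have hsU : ⋃₀ Covw G α = Opw G α := aux_sUnion_covw G hind
    -- the preimage family of a member of Covw
    have hpre_cov : ∀ 𝒱 ∈ Covw G α, (fun V => α ⁻¹' V) '' 𝒱 ∈ G.Cov :=
      fun 𝒱 h𝒱 => h𝒱.1.2
    -- membership criterion for Covw
    have hmk : ∀ 𝒱 : Set (Set K), 𝒱 ⊆ Opw G α →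
        (fun V => α ⁻¹' V) '' 𝒱 ∈ G.Cov → 𝒱 ∈ Covw G α := by
      intro 𝒱 hsub hc
      exact ⟨⟨fun V hV => aux_opw_subset_opS G hind (hsub hV), hc⟩, hsub⟩
    refine ⟨⟨Covw G α, ?_, ?_, ?_, ?_, ?_, ?_, ?_⟩, rfl⟩
    · -- univ_open
      rw [hsU]
      refine ⟨Set.univ, G.univ_open, ?_⟩
      unfold ExOp
      simp
    · -- finite_admissible
      intro 𝒱 hfin hsub
      rw [hsU] at hsub
      refine hmk 𝒱 hsub ?_
      exact G.finite_admissible _ (hfin.image _)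
        (by rintro _ ⟨V, hV, rfl⟩; exact (aux_opw_spec G hind (hsub hV)).2.1)
    · -- union_open (uses additivity)
      intro 𝒱 h𝒱
      rw [hsU]
      set 𝒰 : Set (Set X) := (fun V => α ⁻¹' V) '' 𝒱 with h𝒰def
      have h𝒰 : 𝒰 ∈ G.Cov := hpre_cov 𝒱 h𝒱
      refine ⟨⋃₀ 𝒰, G.union_open 𝒰 h𝒰, ?_⟩
      rw [hadd 𝒰 h𝒰]
      apply subset_antisymm
      · intro x hx
        obtain ⟨V, hV, hxV⟩ := hx
        rw [(aux_opw_spec G hind (h𝒱.2 hV)).2.2] at hxV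
        exact Set.mem_biUnion ⟨V, hV, rfl⟩ hxV
      · intro x hx
        obtain ⟨U, hU, hxU⟩ := Set.mem_iUnion₂.1 hx
        obtain ⟨V, hV, rfl⟩ := hU
        rw [← (aux_opw_spec G hind (h𝒱.2 hV)).2.2] at hxU
        exact ⟨V, hV, hxU⟩
    · -- restrict
      intro 𝒱 h𝒱 W hW
      rw [hsU] at hW
      obtain ⟨hWopen, hWpre, hWeq⟩ := aux_opw_spec G hind hW
      refine hmk _ ?_ ?_
      · rintro _ ⟨V, hV, rfl⟩
        obtain ⟨hVopen, hVpre, hVeq⟩ := aux_opw_spec G hind (h𝒱.2 hV)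
        refine ⟨α ⁻¹' W ∩ α ⁻¹' V, ?_, ?_⟩
        · have := G.restrict _ (hpre_cov 𝒱 h𝒱) (α ⁻¹' W) hWpre
          exact aux_mem_opens_of_mem_cov G this ⟨α ⁻¹' V, ⟨V, hV, rfl⟩, rfl⟩
        · rw [aux_exop_inter, ← hWeq, ← hVeq]
      · have himg : (fun V => α ⁻¹' V) '' ((fun U => W ∩ U) '' 𝒱) =
            (fun U => α ⁻¹' W ∩ U) '' ((fun V => α ⁻¹' V) '' 𝒱) := by
          rw [Set.image_image, Set.image_image]
          rfl
        rw [himg]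
        exact G.restrict _ (hpre_cov 𝒱 h𝒱) (α ⁻¹' W) hWpre
    · -- transitive
      intro 𝒱 h𝒱 f hf
      set g : Set X → Set (Set X) := fun U => (fun V' => α ⁻¹' V') '' f (ExOp α U)
        with hgdef
      have hkey : ∀ V ∈ 𝒱, g (α ⁻¹' V) = (fun V' => α ⁻¹' V') '' f V := by
        intro V hV
        rw [hgdef]
        simp only
        rw [← (aux_opw_spec G hind (h𝒱.2 hV)).2.2]
      have htrans := G.transitive _ (hpre_cov 𝒱 h𝒱) g ?_
      · refine hmk _ ?_ ?_
        · rintro V' ⟨V, hV, hV'⟩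
          exact (hf V hV).1.2 hV'
        · have : (fun V' => α ⁻¹' V') '' {V' | ∃ V ∈ 𝒱, V' ∈ f V} =
              {W | ∃ U ∈ (fun V => α ⁻¹' V) '' 𝒱, W ∈ g U} := by
            ext W
            constructor
            · rintro ⟨V', ⟨V, hV, hV'⟩, rfl⟩
              refine ⟨α ⁻¹' V, ⟨V, hV, rfl⟩, ?_⟩
              rw [hkey V hV]
              exact ⟨V', hV', rfl⟩
            · rintro ⟨_, ⟨V, hV, rfl⟩, hW⟩
              rw [hkey V hV] at hW
              obtain ⟨V', hV', rfl⟩ := hW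
              exact ⟨V', ⟨V, hV, hV'⟩, rfl⟩
          rw [this]
          exact htrans
      · rintro _ ⟨V, hV, rfl⟩
        rw [hkey V hV]
        constructor
        · exact (hf V hV).1.1.2
        · rw [← aux_preimage_sUnion, (hf V hV).2]
    · -- coarsen
      intro 𝒱 h𝒱 𝒲 h𝒲sub hcover hUeq
      rw [hsU] at h𝒲sub
      refine hmk _ h𝒲sub ?_
      refine G.coarsen _ (hpre_cov 𝒱 h𝒱) _ ?_ ?_ ?_
      · rintro _ ⟨W, hW, rfl⟩
        exact (aux_opw_spec G hind (h𝒲sub hW)).2.1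
      · rintro _ ⟨V, hV, rfl⟩
        obtain ⟨W, hW, hVW⟩ := hcover V hV
        exact ⟨α ⁻¹' W, ⟨W, hW, rfl⟩, Set.preimage_mono hVW⟩
      · rw [← aux_preimage_sUnion, ← aux_preimage_sUnion, hUeq]
    · -- regular (uses additivity)
      intro 𝒱 h𝒱 W hWsub hWint
      rw [hsU] at hWint ⊢
      set A : Set X := α ⁻¹' W with hAdef
      set 𝒰 : Set (Set X) := (fun V => α ⁻¹' V) '' 𝒱 with h𝒰def
      have h𝒰 : 𝒰 ∈ G.Cov := hpre_cov 𝒱 h𝒱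
      have hAsub : A ⊆ ⋃₀ 𝒰 := by
        rw [h𝒰def, ← aux_preimage_sUnion]
        exact Set.preimage_mono hWsub
      have hAopen : A ∈ G.Opens := by
        refine G.regular 𝒰 h𝒰 A hAsub ?_
        rintro _ ⟨V, hV, rfl⟩
        have : A ∩ α ⁻¹' V = α ⁻¹' (W ∩ V) := rfl
        rw [this]
        exact (aux_opw_spec G hind (hWint V hV)).2.1
      have hACov : (fun U => A ∩ U) '' 𝒰 ∈ G.Cov := G.restrict 𝒰 h𝒰 A hAopen
      have hWeq : W = ExOp α A := by
        have h1 : ExOp (K := K) α (⋃₀ ((fun U => A ∩ U) '' 𝒰)) =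
            ⋃ S ∈ (fun U => A ∩ U) '' 𝒰, ExOp α S := hadd _ hACov
        have h2 : ⋃₀ ((fun U => A ∩ U) '' 𝒰) = A := by
          apply subset_antisymm
          · rintro x ⟨_, ⟨U, hU, rfl⟩, hx⟩
            exact hx.1
          · intro x hx
            obtain ⟨U, hU, hxU⟩ := hAsub hx
            exact ⟨A ∩ U, ⟨U, hU, rfl⟩, hx, hxU⟩
        rw [h2] at h1
        rw [h1]
        apply subset_antisymm
        · intro x hx
          obtain ⟨V, hV, hxV⟩ := hWsub hx
          have hWV : W ∩ V = ExOp α (A ∩ α ⁻¹' V) := by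
            have := (aux_opw_spec G hind (hWint V hV)).2.2
            rwa [show α ⁻¹' (W ∩ V) = A ∩ α ⁻¹' V from rfl] at this
          have : x ∈ ExOp α (A ∩ α ⁻¹' V) := by rw [← hWV]; exact ⟨hx, hxV⟩
          exact Set.mem_biUnion ⟨α ⁻¹' V, ⟨V, hV, rfl⟩, rfl⟩ this
        · intro x hx
          obtain ⟨S, hS, hxS⟩ := Set.mem_iUnion₂.1 hx
          obtain ⟨_, ⟨V, hV, rfl⟩, rfl⟩ := hS
          have hWV : W ∩ V = ExOp α (A ∩ α ⁻¹' V) := by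
            have := (aux_opw_spec G hind (hWint V hV)).2.2
            rwa [show α ⁻¹' (W ∩ V) = A ∩ α ⁻¹' V from rfl] at this
          rw [← hWV] at hxS
          exact hxS.1
      exact ⟨A, hAopen, hWeq⟩
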